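/- Let n ≥ 1 and p, q ∈ (0,∞]. Let θ ∈ C_0^∞(ℝⁿ). Then there exists a constant c, depending only on n, p, q, and θ, such that for every F ∈ C^∞(𝕋ⁿ) (identified with a smooth 1-periodic function on ℝⁿ): ‖F · (𝓕⁻¹θ)‖_{(L^p,ℓ^q)} ≤ c ‖F‖_{L^p(𝕋ⁿ)}. -/

import Mathlib

open MeasureTheory Real Set
open scoped ENNReal NNReal

noncomputable section

namespace LatticeBump

/-- ℝⁿ as a Euclidean space. -/
abbrev En (n : ℕ) := EuclideanSpace ℝ (Fin n)

/-- ℤⁿ. -/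
abbrev Zn (n : ℕ) := Fin n → ℤ

/-- The lattice point `k ∈ ℤⁿ` viewed as a point of ℝⁿ. -/
def intVec {n : ℕ} (k : Zn n) : En n := WithLp.toLp 2 (fun i => (k i : ℝ))

/-- `e^{2πit}`. -/
def e2πi (t : ℝ) : ℂ := Complex.exp (2 * Real.pi * t * Complex.I)

/-- The dot product on ℝⁿ. -/
def dotE {n : ℕ} (x ξ : En n) : ℝ := ∑ i, x i * ξ i

/-- Fourier transform `f̂(ξ) = ∫ f(x) e^{-2πi x·ξ} dx`. -/
def FT {n : ℕ} (f : En n → ℂ) (ξ : En n) : ℂ := ∫ x, e2πi (-(dotE x ξ)) * f x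

/-- Inverse Fourier transform. -/
def invFT {n : ℕ} (f : En n → ℂ) (x : En n) : ℂ := ∫ ξ, e2πi (dotE x ξ) * f ξ

/-- The bilinear Fourier multiplier operator `T_σ`. -/
def Tbil {n : ℕ} (σ : En n × En n → ℂ) (f₁ f₂ : En n → ℂ) (x : En n) : ℂ :=
  ∫ ξ : En n × En n, e2πi (dotE x (ξ.1 + ξ.2)) * σ ξ * FT f₁ ξ.1 * FT f₂ ξ.2

/-- The lattice bump multiplier `σ_{a,Φ}`. -/
def latticeSymbol {n : ℕ} (a : Zn n × Zn n → ℂ) (Φ : En n × En n → ℂ)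
    (ξ : En n × En n) : ℂ :=
  ∑' μ : Zn n × Zn n, a μ * Φ (ξ.1 - intVec μ.1, ξ.2 - intVec μ.2)

/-- ℓ^q norm (`q ∈ (0,∞]`) of an ℝ≥0∞-valued family. -/
def lqNorm {ι : Type*} (q : ℝ≥0∞) (u : ι → ℝ≥0∞) : ℝ≥0∞ :=
  if q = ∞ then ⨆ i, u i else (∑' i, u i ^ q.toReal) ^ (1 / q.toReal)

/-- L^p norm (`p ∈ (0,∞]`) of an ℝ≥0∞-valued function. -/
def LpNormE {α : Type*} [MeasurableSpace α] (p : ℝ≥0∞) (μ : Measure α)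
    (u : α → ℝ≥0∞) : ℝ≥0∞ :=
  if p = ∞ then essSup u μ else (∫⁻ x, u x ^ p.toReal ∂μ) ^ (1 / p.toReal)

/-- The unit cube `Q = (-1/2, 1/2]ⁿ`. -/
def unitCube (n : ℕ) : Set (En n) := {x | ∀ i, x i ∈ Set.Ioc (-(1:ℝ)/2) (1/2)}

/-- The shifted cube `k + Q`. -/
def shiftedCube {n : ℕ} (k : Zn n) : Set (En n) :=
  {x | ∀ i, x i - (k i : ℝ) ∈ Set.Ioc (-(1:ℝ)/2) (1/2)}

/-- The amalgam space quasi-norm `‖f‖_{(L^p, ℓ^q)}`. -/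
def amalgamNorm {n : ℕ} (p q : ℝ≥0∞) (f : En n → ℂ) : ℝ≥0∞ :=
  lqNorm q (fun k : Zn n => eLpNorm f p (volume.restrict (shiftedCube k)))

/-- Operator quasi-norm of `T_σ` between amalgam spaces (∞ if unbounded). -/
def amalgamOpNorm {n : ℕ} (σ : En n × En n → ℂ) (p₁ p₂ p q₁ q₂ q : ℝ≥0∞) : ℝ≥0∞ :=
  sInf {C : ℝ≥0∞ | ∀ f₁ f₂ : SchwartzMap (En n) ℂ,
    amalgamNorm p q (Tbil σ ⇑f₁ ⇑f₂) ≤ C * amalgamNorm p₁ q₁ ⇑f₁ * amalgamNorm p₂ q₂ ⇑f₂}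

/-- A smooth function on the torus 𝕋ⁿ, identified with a smooth 1-periodic function on ℝⁿ. -/
def IsSmoothPeriodic {n : ℕ} (F : En n → ℂ) : Prop :=
  ContDiff ℝ (⊤ : ℕ∞) F ∧ ∀ (x : En n) (k : Zn n), F (x + intVec k) = F x

/-- Fourier coefficient of a periodic function. -/
def perCoeff {n : ℕ} (F : En n → ℂ) (μ : Zn n) : ℂ :=
  ∫ x in unitCube n, e2πi (-(dotE (intVec μ) x)) * F x

/-- The periodic bilinear Fourier multiplier operator `T^per_a`. -/
def Tper {n : ℕ} (a : Zn n × Zn n → ℂ) (F₁ F₂ : En n → ℂ) (x : En n) : ℂ :=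
  ∑' μ : Zn n × Zn n,
    e2πi (dotE x (intVec μ.1 + intVec μ.2)) * a μ * perCoeff F₁ μ.1 * perCoeff F₂ μ.2

/-- `L^p(𝕋ⁿ)` quasi-norm (over the fundamental domain Q). -/
def perLp {n : ℕ} (p : ℝ≥0∞) (F : En n → ℂ) : ℝ≥0∞ :=
  eLpNorm F p (volume.restrict (unitCube n))

/-- `‖T^per_a‖_{L^{p₁}×L^{p₂}→L^p}`. -/
def perOpNorm {n : ℕ} (a : Zn n × Zn n → ℂ) (p₁ p₂ p : ℝ≥0∞) : ℝ≥0∞ :=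
  ⨆ (F₁ : {F : En n → ℂ // IsSmoothPeriodic F ∧ F ≠ 0})
    (F₂ : {F : En n → ℂ // IsSmoothPeriodic F ∧ F ≠ 0}),
      perLp p (Tper a F₁.1 F₂.1) / (perLp p₁ F₁.1 * perLp p₂ F₂.1)

/-- Condition (B). -/
def CondB {n : ℕ} (Φ : En n × En n → ℂ) : Prop :=
  ∃ ξ0 : En n × En n, Φ ξ0 ≠ 0 ∧
    ∀ μ : Zn n × Zn n, μ ≠ 0 →
      ξ0 ∉ tsupport (fun ξ : En n × En n => Φ (ξ.1 - intVec μ.1, ξ.2 - intVec μ.2))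

/-- `a ∈ ℓ^∞`. -/
def BddSeq {ι : Type*} (a : ι → ℂ) : Prop := ∃ M : ℝ, ∀ i, ‖a i‖ ≤ M

/-- The Fourier multiplier operator `m(D)` realized as convolution with `𝓕⁻¹m`. -/
def mulOp {n : ℕ} (m : En n → ℂ) (g : En n → ℂ) (x : En n) : ℂ :=
  ∫ y, invFT m (x - y) * g y

/-- The Wiener amalgam quasi-norm `‖g‖_{W^{p,q}}` associated with the window `κ`. -/
def wienerNorm {n : ℕ} (κ : En n → ℂ) (p q : ℝ≥0∞) (g : En n → ℂ) : ℝ≥0∞ :=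
  LpNormE p volume (fun x =>
    lqNorm q (fun k : Zn n => (‖mulOp (fun ξ => κ (ξ - intVec k)) g x‖₊ : ℝ≥0∞)))

/-- An admissible window for Wiener amalgam spaces:
`κ ∈ C_0^∞` with `|∑_k κ(ξ-k)| ≥ 1`. -/
def AdmissibleWindow {n : ℕ} (κ : En n → ℂ) : Prop :=
  ContDiff ℝ (⊤ : ℕ∞) κ ∧ HasCompactSupport κ ∧
    ∀ ξ : En n, 1 ≤ ‖∑' k : Zn n, κ (ξ - intVec k)‖

/-- Operator quasi-norm of `T_σ` between Wiener amalgam spaces. -/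
def wienerOpNorm {n : ℕ} (κ : En n → ℂ) (σ : En n × En n → ℂ)
    (p₁ p₂ p q₁ q₂ q : ℝ≥0∞) : ℝ≥0∞ :=
  sInf {C : ℝ≥0∞ | ∀ f₁ f₂ : SchwartzMap (En n) ℂ,
    wienerNorm κ p q (Tbil σ ⇑f₁ ⇑f₂)
      ≤ C * wienerNorm κ p₁ q₁ ⇑f₁ * wienerNorm κ p₂ q₂ ⇑f₂}

/-- The discrete bilinear operator `S_a`. -/
def Sa {n : ℕ} (a : Zn n × Zn n → ℂ) (b₁ b₂ : Zn n → ℂ) (μ : Zn n) : ℂ :=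
  ∑' ν : Zn n, a (ν, μ - ν) * b₁ ν * b₂ (μ - ν)

/-- ℓ^q quasi-norm of a complex sequence on ℤⁿ. -/
def seqLq {n : ℕ} (q : ℝ≥0∞) (b : Zn n → ℂ) : ℝ≥0∞ :=
  lqNorm q (fun μ => (‖b μ‖₊ : ℝ≥0∞))

/-- `‖S_a‖_{ℓ^{q₁}×ℓ^{q₂}→ℓ^q}`: supremum over nonzero finitely supported sequences. -/
def SaOpNorm {n : ℕ} (a : Zn n × Zn n → ℂ) (q₁ q₂ q : ℝ≥0∞) : ℝ≥0∞ :=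
  ⨆ (b₁ : {b : Zn n → ℂ // (Function.support b).Finite ∧ b ≠ 0})
    (b₂ : {b : Zn n → ℂ // (Function.support b).Finite ∧ b ≠ 0}),
      seqLq q (Sa a b₁.1 b₂.1) / (seqLq q₁ b₁.1 * seqLq q₂ b₂.1)



open scoped FourierTransform SchwartzMap

section AuxStatement18

variable {n : ℕ}

theorem abs_apply_le_norm' (x : En n) (i : Fin n) : |x i| ≤ ‖x‖ := by
  rw [EuclideanSpace.norm_eq, ← Real.sqrt_sq_eq_abs]
  apply Real.sqrt_le_sqrt
  simp only [Real.norm_eq_abs, sq_abs]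
  exact Finset.single_le_sum (f := fun j => x j ^ 2) (fun j _ => sq_nonneg _) (Finset.mem_univ i)

theorem exists_schwartz' (θ : En n → ℂ) (hθsm : ContDiff ℝ (⊤ : ℕ∞) θ)
    (hθc : HasCompactSupport θ) : ∃ Θ : 𝓢(En n, ℂ), ⇑Θ = θ := by
  refine ⟨⟨θ, hθsm, fun k m => ?_⟩, rfl⟩
  have h1 : Continuous fun x : En n => ‖x‖ ^ k * ‖iteratedFDeriv ℝ m θ x‖ :=
    ((continuous_norm.pow k)).mul
      (hθsm.continuous_iteratedFDeriv (by exact_mod_cast le_top)).norm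
  have h2 : HasCompactSupport fun x : En n => ‖x‖ ^ k * ‖iteratedFDeriv ℝ m θ x‖ :=
    ((hθc.iteratedFDeriv m).norm).mul_left
  obtain ⟨C, hC⟩ := h2.exists_bound_of_continuous h1
  exact ⟨C, fun x => (Real.le_norm_self _).trans (hC x)⟩

theorem invFT_eq' (f : En n → ℂ) : invFT f = 𝓕⁻ f := by
  funext x
  rw [Real.fourierInv_eq']
  unfold invFT
  congr 1
  funext v
  rw [smul_eq_mul]
  congr 1
  unfold e2πi dotE
  rw [PiLp.inner_apply]
  simp only [RCLike.inner_apply, conj_trivial]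
  push_cast
  ring

theorem schwartz_decay' (g : 𝓢(En n, ℂ)) (N : ℕ) :
    ∃ C : ℝ, 0 ≤ C ∧ ∀ x, (1 + ‖x‖) ^ N * ‖g x‖ ≤ C := by
  refine ⟨2 ^ N * ((Finset.Iic (N, 0)).sup (schwartzSeminormFamily ℝ (En n) ℂ)) g, ?_, ?_⟩
  · positivity
  · intro x
    have := SchwartzMap.one_add_le_sup_seminorm_apply (𝕜 := ℝ) (m := (N, 0)) le_rfl le_rfl g x
    rwa [norm_iteratedFDeriv_zero] at this

theorem measurableSet_shiftedCube' (k : Zn n) : MeasurableSet (shiftedCube k) := by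
  have h : shiftedCube k =
      ⋂ i, (fun x : En n => x i - (k i : ℝ)) ⁻¹' Set.Ioc (-(1:ℝ)/2) (1/2) := by
    ext x; simp [shiftedCube, Set.mem_iInter]
  rw [h]
  exact MeasurableSet.iInter fun i =>
    (((EuclideanSpace.proj (𝕜 := ℝ) i).continuous.sub continuous_const).measurable)
      measurableSet_Ioc

theorem measurableSet_unitCube' : MeasurableSet (unitCube n) := by
  have h : unitCube n =
      ⋂ i, (fun x : En n => x i) ⁻¹' Set.Ioc (-(1:ℝ)/2) (1/2) := by
    ext x; simp [unitCube, Set.mem_iInter]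
  rw [h]
  exact MeasurableSet.iInter fun i =>
    ((EuclideanSpace.proj (𝕜 := ℝ) i).continuous.measurable) measurableSet_Ioc

theorem preimage_shiftedCube (k : Zn n) :
    (fun x : En n => x + intVec k) ⁻¹' shiftedCube k = unitCube n := by
  ext x
  simp only [shiftedCube, unitCube, Set.mem_preimage, Set.mem_setOf_eq]
  refine forall_congr' fun i => ?_
  have : (x + intVec k) i - (k i : ℝ) = x i := by
    simp [intVec]
  rw [this]

theorem eLpNorm_restrict_shiftedCube (p : ℝ≥0∞) (F : En n → ℂ) (hF : Continuous F)
    (hper : ∀ (x : En n) (k : Zn n), F (x + intVec k) = F x) (k : Zn n) :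
    eLpNorm F p (volume.restrict (shiftedCube k)) = perLp p F := by
  have hmeas : Measurable fun x : En n => x + intVec k := measurable_id.add_const _
  have hT : MeasurePreserving (fun x : En n => x + intVec k)
      (volume.restrict (unitCube n)) (volume.restrict (shiftedCube k)) := by
    refine ⟨hmeas, ?_⟩
    rw [← preimage_shiftedCube k, ← Measure.restrict_map hmeas (measurableSet_shiftedCube' k),
      (measurePreserving_add_right volume (intVec k)).map_eq]
  have h1 : eLpNorm (F ∘ fun x : En n => x + intVec k) p (volume.restrict (unitCube n)) =
      eLpNorm F p (volume.restrict (shiftedCube k)) :=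
    eLpNorm_comp_measurePreserving (hF.aestronglyMeasurable) hT
  have h2 : (F ∘ fun x : En n => x + intVec k) = F := by
    funext x; exact hper x k
  rw [← h1, h2]; rfl

theorem cube_eLpNorm_bound (p : ℝ≥0∞) (F g : En n → ℂ) (hF : Continuous F)
    (hper : ∀ (x : En n) (k : Zn n), F (x + intVec k) = F x) (k : Zn n) (d : ℝ) (hd : 0 ≤ d)
    (hbound : ∀ x ∈ shiftedCube k, ‖g x‖ ≤ d) :
    eLpNorm (fun x => F x * g x) p (volume.restrict (shiftedCube k))
      ≤ ENNReal.ofReal d * perLp p F := by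
  have h1 : ∀ᵐ x ∂volume.restrict (shiftedCube k), ‖F x * g x‖ ≤ ‖(d : ℂ) • F x‖ := by
    refine ae_restrict_of_forall_mem (measurableSet_shiftedCube' k) fun x hx => ?_
    rw [norm_smul, norm_mul]
    have h2 : ‖(d : ℂ)‖ = d := by
      rw [Complex.norm_real, Real.norm_eq_abs, abs_of_nonneg hd]
    rw [h2, mul_comm ‖F x‖ ‖g x‖]
    exact mul_le_mul_of_nonneg_right (hbound x hx) (norm_nonneg _)
  calc eLpNorm (fun x => F x * g x) p (volume.restrict (shiftedCube k))
      ≤ eLpNorm (fun x => (d : ℂ) • F x) p (volume.restrict (shiftedCube k)) :=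
        eLpNorm_mono_ae h1
    _ = ‖(d : ℂ)‖₊ • eLpNorm F p (volume.restrict (shiftedCube k)) :=
        eLpNorm_const_smul (d : ℂ) F p (volume.restrict (shiftedCube k))
    _ = ENNReal.ofReal d * perLp p F := by
        rw [eLpNorm_restrict_shiftedCube p F hF hper k, ENNReal.smul_def, smul_eq_mul]
        congr 1
        rw [← Real.enorm_eq_ofReal hd]
        norm_cast

theorem lqNorm_mono {ι : Type*} (q : ℝ≥0∞) (u v : ι → ℝ≥0∞) (h : ∀ i, u i ≤ v i) :
    lqNorm q u ≤ lqNorm q v := by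
  unfold lqNorm
  split
  · exact iSup_mono h
  · exact ENNReal.rpow_le_rpow
      (ENNReal.tsum_le_tsum fun i => ENNReal.rpow_le_rpow (h i) ENNReal.toReal_nonneg)
      (by positivity)

theorem lqNorm_mul_right {ι : Type*} (q : ℝ≥0∞) (hq : 0 < q) (u : ι → ℝ≥0∞) (t : ℝ≥0∞) :
    lqNorm q (fun i => u i * t) = lqNorm q u * t := by
  unfold lqNorm
  split
  · exact (ENNReal.iSup_mul u t).symm
  · rename_i hq'
    have hr : 0 < q.toReal := ENNReal.toReal_pos hq.ne' hq'
    simp_rw [ENNReal.mul_rpow_of_nonneg _ _ ENNReal.toReal_nonneg, ENNReal.tsum_mul_right,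
      ENNReal.mul_rpow_of_nonneg _ _ (by positivity : (0:ℝ) ≤ 1 / q.toReal)]
    congr 1
    rw [← ENNReal.rpow_mul, mul_one_div, div_self hr.ne', ENNReal.rpow_one]

theorem tsum_prod_pi (f : ℤ → ℝ≥0∞) :
    ∀ N : ℕ, ∑' k : Fin N → ℤ, ∏ i, f (k i) = (∑' j : ℤ, f j) ^ N := by
  intro N
  induction N with
  | zero =>
      rw [pow_zero]
      have : ∀ k : Fin 0 → ℤ, (∏ i, f (k i)) = 1 := fun k => Finset.prod_of_isEmpty _
      simp only [this]
      exact tsum_eq_single (fun i => 0) (fun b hb => absurd (Subsingleton.elim b _) hb) |>.trans rfl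
  | succ N ih =>
      rw [← Equiv.tsum_eq (Fin.consEquiv fun _ : Fin (N+1) => ℤ) fun k => ∏ i, f (k i)]
      have h1 : ∀ p : ℤ × (Fin N → ℤ),
          (∏ i, f ((Fin.consEquiv fun _ : Fin (N+1) => ℤ) p i)) = f p.1 * ∏ i, f (p.2 i) := by
        intro p
        simp only [Fin.consEquiv_apply]
        rw [Fin.prod_univ_succ]
        simp [Fin.cons_zero, Fin.cons_succ]
      simp_rw [h1]
      rw [ENNReal.tsum_prod']
      simp_rw [ENNReal.tsum_mul_left]
      rw [ih, ENNReal.tsum_mul_right, pow_succ, mul_comm]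

theorem int_sum_finite : ∑' j : ℤ, ENNReal.ofReal (((1 + |(j : ℝ)|) ^ 2)⁻¹) ≠ ∞ := by
  have hnat : Summable fun m : ℕ => (((m : ℝ)) ^ 2)⁻¹ := Real.summable_nat_pow_inv.2 one_lt_two
  have hnat1 : Summable fun m : ℕ => ((1 + (m : ℝ)) ^ 2)⁻¹ := by
    have := (summable_nat_add_iff (f := fun m : ℕ => (((m : ℝ)) ^ 2)⁻¹) 1).2 hnat
    refine this.congr fun m => ?_
    push_cast
    ring_nf
  have hs : Summable fun j : ℤ => ((1 + |(j : ℝ)|) ^ 2)⁻¹ := by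
    apply Summable.of_nat_of_neg
    · refine hnat1.congr fun m => ?_
      rw [Int.cast_natCast, abs_of_nonneg (by positivity : (0:ℝ) ≤ (m:ℝ))]
    · refine hnat1.congr fun m => ?_
      push_cast
      rw [abs_neg, abs_of_nonneg (by positivity : (0:ℝ) ≤ (m:ℝ))]
  rw [← ENNReal.ofReal_tsum_of_nonneg (fun j => by positivity) hs]
  exact ENNReal.ofReal_ne_top

end AuxStatement18

/-- Multiplying a smooth periodic function by `𝓕⁻¹θ` lands in the amalgam space,
with norm controlled by the `L^p(𝕋ⁿ)` norm. -/
theorem statement18 (n : ℕ) (hn : 1 ≤ n) (p q : ℝ≥0∞) (hp : 0 < p) (hq : 0 < q)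
    (θ : En n → ℂ) (hθsm : ContDiff ℝ (⊤ : ℕ∞) θ) (hθc : HasCompactSupport θ) :
    ∃ c : ℝ≥0∞, 0 < c ∧ c < ∞ ∧
      ∀ F : En n → ℂ, IsSmoothPeriodic F →
        amalgamNorm p q (fun x => F x * invFT θ x) ≤ c * perLp p F := by
  classical
  obtain ⟨Θ, hΘ⟩ := exists_schwartz' θ hθsm hθc
  obtain ⟨g, hg⟩ : ∃ g : 𝓢(En n, ℂ), ⇑g = invFT θ := by
    refine ⟨(FourierTransform.fourierCLE ℂ 𝓢(En n, ℂ)).symm Θ, ?_⟩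
    rw [invFT_eq', ← hΘ]
    ext x
    simp [SchwartzMap.fourierInv_coe]
  set m : ℕ := if q = ∞ then 0 else ⌈2 / q.toReal⌉₊ with hm
  obtain ⟨C, hC0, hC⟩ := schwartz_decay' g (n * m)
  have hC' : ∀ x, (1 + ‖x‖) ^ (n * m) * ‖invFT θ x‖ ≤ C := by
    intro x; have := hC x; rwa [hg] at this
  set P : Zn n → ℝ := fun k => ∏ i, (1 + |(k i : ℝ)|) with hPdef
  have hP1 : ∀ k, 1 ≤ P k := by
    intro k
    show (1:ℝ) ≤ ∏ i, (1 + |(k i : ℝ)|)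
    calc (1:ℝ) = ∏ _i : Fin n, (1:ℝ) := by simp
      _ ≤ ∏ i, (1 + |(k i : ℝ)|) :=
        Finset.prod_le_prod (fun i _ => zero_le_one)
          (fun i _ => le_add_of_nonneg_right (abs_nonneg _))
  have hPpos : ∀ k, 0 < P k := fun k => lt_of_lt_of_le one_pos (hP1 k)
  set D : ℝ := 2 ^ (n * m) * C with hDdef
  have hD0 : 0 ≤ D := by positivity
  set d : Zn n → ℝ := fun k => D * ((P k) ^ m)⁻¹ with hddef
  have hd0 : ∀ k, 0 ≤ d k :=
    fun k => mul_nonneg hD0 (inv_nonneg.2 (pow_nonneg (hPpos k).le m))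
  have hgb : ∀ (k : Zn n), ∀ x ∈ shiftedCube k, ‖invFT θ x‖ ≤ d k := by
    intro k x hx
    have hxi : ∀ i, 1 + |(k i : ℝ)| ≤ 2 * (1 + ‖x‖) := by
      intro i
      have h0 := hx i
      rw [Set.mem_Ioc] at h0
      have h1 : |x i - (k i : ℝ)| ≤ 1 / 2 := by
        rw [abs_le]; constructor <;> [linarith [h0.1]; linarith [h0.2]]
      have h2 : |(k i : ℝ)| ≤ |x i| + 1 / 2 := by
        have h2a := abs_sub_abs_le_abs_sub ((k i : ℝ)) (x i)
        have h2b : |(k i : ℝ) - x i| = |x i - (k i : ℝ)| := abs_sub_comm _ _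
        linarith
      have h4 : |x i| ≤ ‖x‖ := abs_apply_le_norm' x i
      linarith [norm_nonneg x]
    have hPk : P k ≤ 2 ^ n * (1 + ‖x‖) ^ n := by
      calc P k = ∏ i, (1 + |(k i : ℝ)|) := rfl
        _ ≤ ∏ _i : Fin n, (2 * (1 + ‖x‖)) :=
            Finset.prod_le_prod (fun i _ => by positivity) (fun i _ => hxi i)
        _ = (2 * (1 + ‖x‖)) ^ n := by
            rw [Finset.prod_const, Finset.card_univ, Fintype.card_fin]
        _ = 2 ^ n * (1 + ‖x‖) ^ n := mul_pow _ _ _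
    have hPm : P k ^ m ≤ 2 ^ (n * m) * (1 + ‖x‖) ^ (n * m) := by
      calc P k ^ m ≤ (2 ^ n * (1 + ‖x‖) ^ n) ^ m := pow_le_pow_left₀ (hPpos k).le hPk m
        _ = 2 ^ (n * m) * (1 + ‖x‖) ^ (n * m) := by rw [mul_pow, ← pow_mul, ← pow_mul]
    have hmain : ‖invFT θ x‖ * P k ^ m ≤ D := by
      calc ‖invFT θ x‖ * P k ^ m
          ≤ ‖invFT θ x‖ * (2 ^ (n * m) * (1 + ‖x‖) ^ (n * m)) :=
            mul_le_mul_of_nonneg_left hPm (norm_nonneg _)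
        _ = 2 ^ (n * m) * ((1 + ‖x‖) ^ (n * m) * ‖invFT θ x‖) := by ring
        _ ≤ 2 ^ (n * m) * C := mul_le_mul_of_nonneg_left (hC' x) (by positivity)
        _ = D := rfl
    have h5 : 0 < P k ^ m := pow_pos (hPpos k) m
    have h6 : ‖invFT θ x‖ ≤ D / P k ^ m := (le_div_iff₀ h5).2 hmain
    simpa [hddef, div_eq_mul_inv] using h6
  set A : ℝ≥0∞ := lqNorm q (fun k : Zn n => ENNReal.ofReal (d k)) with hA
  have hAfin : A < ∞ := by
    by_cases hq' : q = ∞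
    · rw [hA]; unfold lqNorm; rw [if_pos hq']
      have hdD : ∀ k : Zn n, ENNReal.ofReal (d k) ≤ ENNReal.ofReal D := by
        intro k
        apply ENNReal.ofReal_le_ofReal
        have h7 : (P k ^ m)⁻¹ ≤ 1 := inv_le_one_of_one_le₀ (one_le_pow₀ (hP1 k))
        calc d k = D * (P k ^ m)⁻¹ := rfl
          _ ≤ D * 1 := mul_le_mul_of_nonneg_left h7 hD0
          _ = D := mul_one _
      exact lt_of_le_of_lt (iSup_le hdD) ENNReal.ofReal_lt_top
    · have hr : 0 < q.toReal := ENNReal.toReal_pos hq.ne' hq'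
      have hmr : 2 ≤ (m : ℝ) * q.toReal := by
        have h1 : 2 / q.toReal ≤ (m : ℝ) := by
          rw [hm]; simp only [if_neg hq']; exact Nat.le_ceil _
        calc (2 : ℝ) = 2 / q.toReal * q.toReal := by field_simp
          _ ≤ (m : ℝ) * q.toReal := mul_le_mul_of_nonneg_right h1 hr.le
      rw [hA]; unfold lqNorm; rw [if_neg hq']
      refine ENNReal.rpow_lt_top_of_nonneg (by positivity) ?_
      have hterm : ∀ k : Zn n, ENNReal.ofReal (d k) ^ q.toReal ≤
          ENNReal.ofReal (D ^ q.toReal) *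
            ∏ i, ENNReal.ofReal (((1 + |(k i : ℝ)|) ^ 2)⁻¹) := by
        intro k
        rw [ENNReal.ofReal_rpow_of_nonneg (hd0 k) hr.le]
        have hreal : d k ^ q.toReal ≤
            D ^ q.toReal * ∏ i, ((1 + |(k i : ℝ)|) ^ 2)⁻¹ := by
          have hdk : d k = D * (P k ^ m)⁻¹ := rfl
          rw [hdk, Real.mul_rpow hD0 (inv_nonneg.2 (pow_nonneg (hPpos k).le m))]
          refine mul_le_mul_of_nonneg_left ?_ (Real.rpow_nonneg hD0 _)
          have e1 : ((P k ^ m)⁻¹) ^ q.toReal = P k ^ (-((m : ℝ) * q.toReal)) := by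
            rw [← Real.rpow_natCast (P k) m, ← Real.rpow_neg (hPpos k).le,
              ← Real.rpow_mul (hPpos k).le, neg_mul]
          have e2 : P k ^ (-((m : ℝ) * q.toReal)) ≤ P k ^ (-(2 : ℝ)) :=
            Real.rpow_le_rpow_of_exponent_le (hP1 k) (by linarith)
          have e3 : P k ^ (-(2 : ℝ)) = ∏ i, ((1 + |(k i : ℝ)|) ^ 2)⁻¹ := by
            simp only [hPdef]
            rw [Real.rpow_neg (Finset.prod_nonneg fun i _ => by positivity),
              show ((2 : ℝ)) = ((2 : ℕ) : ℝ) from by norm_num, Real.rpow_natCast,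
              Finset.prod_inv_distrib, Finset.prod_pow]
          rw [e1, ← e3]
          exact e2
        calc ENNReal.ofReal (d k ^ q.toReal)
            ≤ ENNReal.ofReal (D ^ q.toReal * ∏ i, ((1 + |(k i : ℝ)|) ^ 2)⁻¹) :=
              ENNReal.ofReal_le_ofReal hreal
          _ = ENNReal.ofReal (D ^ q.toReal) *
              ∏ i, ENNReal.ofReal (((1 + |(k i : ℝ)|) ^ 2)⁻¹) := by
              rw [ENNReal.ofReal_mul (Real.rpow_nonneg hD0 _),
                ENNReal.ofReal_prod_of_nonneg (fun i _ => by positivity)]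
      have hsum : ∑' k : Zn n, ENNReal.ofReal (d k) ^ q.toReal ≤
          ENNReal.ofReal (D ^ q.toReal) *
            (∑' j : ℤ, ENNReal.ofReal (((1 + |(j : ℝ)|) ^ 2)⁻¹)) ^ n := by
        calc ∑' k : Zn n, ENNReal.ofReal (d k) ^ q.toReal
            ≤ ∑' k : Zn n, (ENNReal.ofReal (D ^ q.toReal) *
              ∏ i, ENNReal.ofReal (((1 + |(k i : ℝ)|) ^ 2)⁻¹)) :=
              ENNReal.tsum_le_tsum hterm
          _ = ENNReal.ofReal (D ^ q.toReal) *
              ∑' k : Zn n, ∏ i, ENNReal.ofReal (((1 + |(k i : ℝ)|) ^ 2)⁻¹) :=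
              ENNReal.tsum_mul_left
          _ = ENNReal.ofReal (D ^ q.toReal) *
              (∑' j : ℤ, ENNReal.ofReal (((1 + |(j : ℝ)|) ^ 2)⁻¹)) ^ n := by
              rw [tsum_prod_pi (fun j : ℤ => ENNReal.ofReal (((1 + |(j : ℝ)|) ^ 2)⁻¹)) n]
      refine ne_top_of_le_ne_top ?_ hsum
      exact ENNReal.mul_ne_top ENNReal.ofReal_ne_top (ENNReal.pow_ne_top int_sum_finite)
  refine ⟨A + 1, ?_, ?_, ?_⟩
  · exact lt_of_lt_of_le zero_lt_one le_add_self
  · exact ENNReal.add_lt_top.2 ⟨hAfin, ENNReal.one_lt_top⟩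
  · intro F hF
    have key : ∀ k : Zn n, eLpNorm (fun x => F x * invFT θ x) p
        (volume.restrict (shiftedCube k)) ≤ ENNReal.ofReal (d k) * perLp p F := fun k =>
      cube_eLpNorm_bound p F (invFT θ) (hF.1.continuous) hF.2 k (d k) (hd0 k) (hgb k)
    calc amalgamNorm p q (fun x => F x * invFT θ x)
        ≤ lqNorm q (fun k : Zn n => ENNReal.ofReal (d k) * perLp p F) :=
          lqNorm_mono q _ _ key
      _ = A * perLp p F := lqNorm_mul_right q hq _ _
      _ ≤ (A + 1) * perLp p F := mul_le_mul_left le_self_add _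

end LatticeBump
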